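/- arXiv:1707.05838 — 6 statements merged into one kernel-verified Lean document; each statement's English description precedes it below -/
import Mathlib

section
/- For every x ∈ [0,1], the series ∑_{k∈ℤ} e^{2πikx}/(1 + 4π²k²) converges absolutely and its sum equals (e^x + e^{1-x})/(2(e-1)). -/
open Real

noncomputable def gKernel : ℝ → ℂ := fun t =>
  (Complex.exp t + Complex.exp (1 - t)) / (2 * (Complex.exp 1 - 1))

lemma gKernel_endpoints : gKernel 0 = gKernel 1 := by
  simp [gKernel, add_comm]

lemma denom_ne_zero (n : ℤ) : (1 + 4 * (π : ℂ) ^ 2 * (n : ℂ) ^ 2) ≠ 0 := by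
  have h : (0:ℝ) < 1 + 4 * π ^ 2 * (n:ℝ) ^ 2 := by positivity
  have : ((1 + 4 * π ^ 2 * (n:ℝ) ^ 2 : ℝ) : ℂ) ≠ 0 := by
    exact_mod_cast h.ne'
  simpa using this

lemma coeff_eq (n : ℤ) :
    haveI : Fact ((0:ℝ) < 1) := ⟨one_pos⟩
    fourierCoeff (AddCircle.liftIco 1 0 gKernel) n
      = 1 / (1 + 4 * (π : ℂ) ^ 2 * (n : ℂ) ^ 2) := by
  haveI : Fact ((0:ℝ) < 1) := ⟨one_pos⟩
  set c₁ : ℂ := 1 - 2 * π * Complex.I * n with hc₁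
  set c₂ : ℂ := 1 + 2 * π * Complex.I * n with hc₂
  have hc₁0 : c₁ ≠ 0 := by
    intro h
    have := congrArg Complex.re h
    simp [hc₁, Complex.sub_re, Complex.one_re] at this
  have hc₂0 : c₂ ≠ 0 := by
    intro h
    have := congrArg Complex.re h
    simp [hc₂, Complex.add_re, Complex.one_re] at this
  have hexp1 : Complex.exp (2 * π * Complex.I * (-n)) = 1 := by
    have := Complex.exp_int_mul_two_pi_mul_I (-n)
    rw [← this]
    congr 1
    push_cast
    ring
  have hexpm : Complex.exp (-(2 * π * Complex.I * n)) = 1 := by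
    rw [← hexp1]; congr 1; ring
  have hexpp : Complex.exp (2 * π * Complex.I * n) = 1 := by
    have := Complex.exp_int_mul_two_pi_mul_I n
    rw [← this]; congr 1; ring
  rw [fourierCoeff_liftIco_eq, fourierCoeffOn_eq_integral]
  haveI : Fact ((0:ℝ) < 0 + 1 - 0) := ⟨by norm_num⟩
  have key : ∀ t : ℝ, fourier (-n) (t : AddCircle ((0:ℝ) + 1 - 0)) • gKernel t
      = (Complex.exp (c₁ * t) + Complex.exp 1 * Complex.exp ((-c₂) * t))
          / (2 * (Complex.exp 1 - 1)) := by
    intro t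
    rw [fourier_coe_apply, smul_eq_mul, gKernel, ← mul_div_assoc]
    congr 1
    rw [mul_add, ← Complex.exp_add, ← Complex.exp_add]
    congr 1
    · congr 1
      rw [hc₁]
      push_cast
      ring
    · rw [← Complex.exp_add]
      congr 1
      rw [hc₂]
      push_cast
      ring
  rw [intervalIntegral.integral_congr (g := fun t : ℝ =>
      (Complex.exp (c₁ * t) + Complex.exp 1 * Complex.exp ((-c₂) * t))
        / (2 * (Complex.exp 1 - 1))) (fun t _ => key t)]
  have hint : ∀ c : ℂ, IntervalIntegrable (fun t : ℝ => Complex.exp (c * t))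
      MeasureTheory.volume 0 (0 + 1) := fun c =>
    (Complex.continuous_exp.comp (by continuity)).intervalIntegrable 0 (0 + 1)
  rw [intervalIntegral.integral_div]
  rw [intervalIntegral.integral_add (hint c₁) ((hint (-c₂)).const_mul _)]
  rw [intervalIntegral.integral_const_mul]
  rw [integral_exp_mul_complex hc₁0, integral_exp_mul_complex (neg_ne_zero.mpr hc₂0)]
  have hE1 : Complex.exp (c₁ * ((0:ℝ) + 1 : ℝ)) = Complex.exp 1 := by
    rw [show c₁ * (((0:ℝ) + 1 : ℝ) : ℂ) = 1 + -(2 * (π:ℂ) * Complex.I * n) by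
      push_cast [hc₁]; ring, Complex.exp_add, hexpm, mul_one]
  have hE2 : Complex.exp (-c₂ * (((0:ℝ) + 1 : ℝ) : ℂ)) = (Complex.exp 1)⁻¹ := by
    rw [show -c₂ * (((0:ℝ) + 1 : ℝ) : ℂ) = -1 + -(2 * (π:ℂ) * Complex.I * n) by
      push_cast [hc₂]; ring, Complex.exp_add, hexpm, mul_one, Complex.exp_neg]
  rw [hE1, hE2, Complex.ofReal_zero, mul_zero, mul_zero, Complex.exp_zero]
  have hEne : Complex.exp (1:ℂ) ≠ 0 := Complex.exp_ne_zero 1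
  have hEone : Complex.exp (1:ℂ) - 1 ≠ 0 := by
    have h1 : Complex.exp (1:ℂ) = (Real.exp 1 : ℂ) := by
      rw [Complex.ofReal_exp]; norm_num
    rw [h1]
    intro h
    have h2 : (Real.exp 1 : ℂ) = 1 := by linear_combination h
    have h3 : Real.exp 1 = 1 := by exact_mod_cast h2
    have := Real.exp_one_gt_d9
    linarith
  have hprod : c₁ * c₂ = 1 + 4 * (π:ℂ)^2 * (n:ℂ)^2 := by
    rw [hc₁, hc₂]
    ring_nf
    rw [Complex.I_sq]
    ring
  have hne := denom_ne_zero n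
  have hsmul : ∀ z : ℂ, ((1:ℝ)/(0 + 1 - 0) : ℝ) • z = z := by
    intro z; norm_num
  rw [hsmul]
  rw [← hprod] at hne ⊢
  field_simp
  ring

lemma real_summable : Summable (fun k : ℤ => 1 / (1 + 4 * π ^ 2 * (k : ℝ) ^ 2)) := by
  have base : Summable (fun k : ℤ => 1 / (k : ℝ) ^ 2) :=
    summable_one_div_int_pow.mpr one_lt_two
  refine base.of_norm_bounded_eventually ?_
  rw [Filter.eventually_cofinite]
  apply Set.Finite.subset (Set.finite_singleton 0)
  intro k hk
  simp only [Set.mem_setOf_eq, not_le] at hk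
  by_contra hk0
  have hk0' : k ≠ 0 := by simpa using hk0
  have h1 : (1:ℝ) ≤ (k:ℝ)^2 := by
    have : (1:ℤ) ≤ k^2 := by rcases lt_or_gt_of_ne hk0' with h|h <;> nlinarith
    exact_mod_cast this
  have hpi : (1:ℝ) ≤ 4 * π ^ 2 := by nlinarith [Real.pi_gt_three]
  have hpos : (0:ℝ) < 1 + 4 * π ^ 2 * (k:ℝ)^2 := by positivity
  have hle : (k:ℝ)^2 ≤ 1 + 4 * π ^ 2 * (k:ℝ)^2 := by nlinarith
  have : ‖1 / (1 + 4 * π ^ 2 * (k : ℝ) ^ 2)‖ ≤ 1 / (k:ℝ)^2 := by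
    rw [norm_div, norm_one, Real.norm_of_nonneg hpos.le]
    apply one_div_le_one_div_of_le (by positivity) hle
  linarith [hk.trans_le this]

lemma norm_term (k : ℤ) (x : ℝ) :
    ‖Complex.exp (2 * (π : ℂ) * (k : ℂ) * (x : ℂ) * Complex.I) /
        (1 + 4 * (π : ℂ) ^ 2 * (k : ℂ) ^ 2)‖ = 1 / (1 + 4 * π ^ 2 * (k : ℝ) ^ 2) := by
  rw [norm_div]
  have h1 : (2 * (π : ℂ) * (k : ℂ) * (x : ℂ) * Complex.I)
      = ((2 * π * k * x : ℝ) : ℂ) * Complex.I := by push_cast; ring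
  have h2 : ((1 : ℂ) + 4 * (π : ℂ) ^ 2 * (k : ℂ) ^ 2)
      = ((1 + 4 * π ^ 2 * (k : ℝ) ^ 2 : ℝ) : ℂ) := by push_cast; ring
  rw [h1, h2]
  have hpos : (0:ℝ) < 1 + 4 * π ^ 2 * (k:ℝ)^2 := by positivity
  rw [Complex.norm_exp_ofReal_mul_I,
    Complex.norm_real, Real.norm_of_nonneg hpos.le]

/-- For every `x ∈ [0,1]` the series `∑_{k ∈ ℤ} e^{2πikx} / (1 + 4π²k²)` converges
absolutely and its sum equals `(e^x + e^{1-x}) / (2(e-1))`. -/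
theorem tsum_fourier_kernel (x : ℝ) (hx : x ∈ Set.Icc (0 : ℝ) 1) :
    Summable (fun k : ℤ =>
      ‖Complex.exp (2 * (π : ℂ) * (k : ℂ) * (x : ℂ) * Complex.I) /
        (1 + 4 * (π : ℂ) ^ 2 * (k : ℂ) ^ 2)‖) ∧
    ∑' k : ℤ, Complex.exp (2 * (π : ℂ) * (k : ℂ) * (x : ℂ) * Complex.I) /
        (1 + 4 * (π : ℂ) ^ 2 * (k : ℂ) ^ 2)
      = (((Real.exp x + Real.exp (1 - x)) / (2 * (Real.exp 1 - 1)) : ℝ) : ℂ) := by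
  haveI : Fact ((0:ℝ) < 1) := ⟨one_pos⟩
  constructor
  · exact real_summable.congr fun k => (norm_term k x).symm
  · -- Fourier series argument
    have hcont : Continuous (AddCircle.liftIco 1 0 gKernel) := by
      apply AddCircle.liftIco_zero_continuous
      · exact gKernel_endpoints
      · apply Continuous.continuousOn
        unfold gKernel
        fun_prop
    set F : C(AddCircle (1:ℝ), ℂ) := ⟨AddCircle.liftIco 1 0 gKernel, hcont⟩ with hF
    have hcoeff : ∀ k : ℤ, fourierCoeff (⇑F) k = 1 / (1 + 4 * (π : ℂ) ^ 2 * (k : ℂ) ^ 2) := by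
      intro k
      rw [hF, ContinuousMap.coe_mk]
      exact coeff_eq k
    have hsum : Summable (fourierCoeff (⇑F)) := by
      have : Summable (fun k : ℤ => ((1 / (1 + 4 * π ^ 2 * (k : ℝ) ^ 2) : ℝ) : ℂ)) :=
        Complex.summable_ofReal.mpr real_summable
      refine this.congr fun k => ?_
      rw [hcoeff k]
      push_cast
      ring
    have hs := has_pointwise_sum_fourier_series_of_summable hsum (x : AddCircle (1:ℝ))
    have hterm : ∀ k : ℤ, fourierCoeff (⇑F) k • fourier k ((x : ℝ) : AddCircle (1:ℝ))
        = Complex.exp (2 * (π : ℂ) * (k : ℂ) * (x : ℂ) * Complex.I) /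
            (1 + 4 * (π : ℂ) ^ 2 * (k : ℂ) ^ 2) := by
      intro k
      rw [hcoeff k, fourier_coe_apply, smul_eq_mul,
        show 2 * (π:ℂ) * Complex.I * (k:ℂ) * (x:ℂ) / ((1:ℝ):ℂ)
          = 2 * (π : ℂ) * (k : ℂ) * (x : ℂ) * Complex.I by push_cast; ring]
      ring
    have hFx : F ((x : ℝ) : AddCircle (1:ℝ)) = gKernel x := by
      rcases eq_or_lt_of_le hx.2 with h1 | h1
      · have hx1 : ((x : ℝ) : AddCircle (1:ℝ)) = ((0:ℝ) : AddCircle (1:ℝ)) := by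
          rw [h1]
          simp [AddCircle.coe_period]
        rw [hF, ContinuousMap.coe_mk, hx1,
          AddCircle.liftIco_zero_coe_apply (by constructor <;> norm_num),
          gKernel_endpoints, ← h1]
      · rw [hF, ContinuousMap.coe_mk,
          AddCircle.liftIco_zero_coe_apply ⟨hx.1, h1⟩]
    rw [hFx] at hs
    have := (hs.congr_fun (fun k => (hterm k).symm)).tsum_eq
    rw [this, gKernel]
    push_cast [Complex.ofReal_exp]
    norm_num
end

section
/- Let w : ℝ → ℝ be continuous and 1-periodic, with m₁ = min_{y∈[0,1]} w(y) and m₂ = max_{y∈[0,1]} w(y). Then for every x ∈ ℝ, -∫_0^1 ((e^y - e^{1-y})/(2(e-1))) · w(x - y) dy ≤ (m₂ - m₁)/2. -/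
open MeasureTheory

/-- If `w` is continuous and 1-periodic with minimum `m₁` and maximum `m₂` on `[0,1]`,
then for every `x`, `-∫_0^1 K'(y) w(x-y) dy ≤ (m₂ - m₁)/2`, where
`K'(y) = (e^y - e^{1-y}) / (2(e-1))`. -/
theorem neg_integral_kernel_deriv_le (w : ℝ → ℝ) (hw : Continuous w)
    (hper : ∀ x : ℝ, w (x + 1) = w x) (m₁ m₂ : ℝ)
    (hm₁ : IsLeast (w '' Set.Icc (0 : ℝ) 1) m₁)
    (hm₂ : IsGreatest (w '' Set.Icc (0 : ℝ) 1) m₂) (x : ℝ) :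
    -∫ y in (0:ℝ)..1,
        ((Real.exp y - Real.exp (1 - y)) / (2 * (Real.exp 1 - 1))) * w (x - y)
      ≤ (m₂ - m₁) / 2 := by
  have hper' : Function.Periodic w 1 := hper
  -- global bounds
  have hb : ∀ z : ℝ, m₁ ≤ w z ∧ w z ≤ m₂ := by
    intro z
    have hf : Int.fract z ∈ Set.Icc (0:ℝ) 1 :=
      ⟨Int.fract_nonneg z, (Int.fract_lt_one z).le⟩
    have hz : w (Int.fract z) = w z := by
      rw [Int.fract]
      simpa using hper'.sub_int_mul_eq (x := z) ⌊z⌋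
    have hmem : w z ∈ w '' Set.Icc (0:ℝ) 1 := ⟨Int.fract z, hf, hz⟩
    exact ⟨hm₁.2 hmem, hm₂.2 hmem⟩
  have hmle : m₁ ≤ m₂ := le_trans (hb 0).1 (hb 0).2
  set c : ℝ := (m₁ + m₂) / 2 with hc
  set K : ℝ → ℝ := fun y => (Real.exp y - Real.exp (1 - y)) / (2 * (Real.exp 1 - 1)) with hK
  have hKcont : Continuous K := by
    apply Continuous.div_const
    exact Real.continuous_exp.sub (Real.continuous_exp.comp (continuous_const.sub continuous_id))
  have hwcont : Continuous fun y : ℝ => w (x - y) :=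
    hw.comp (continuous_const.sub continuous_id)
  have hiK : IntervalIntegrable K volume 0 1 := hKcont.intervalIntegrable _ _
  have hiKw : IntervalIntegrable (fun y => K y * w (x - y)) volume 0 1 :=
    (hKcont.mul hwcont).intervalIntegrable _ _
  have hK0 : (∫ y in (0:ℝ)..1, K y) = 0 := by
    have h1 : (∫ y in (0:ℝ)..1, Real.exp (1 - y)) = Real.exp 1 - Real.exp 0 := by
      rw [intervalIntegral.integral_comp_sub_left (fun y => Real.exp y) 1]
      norm_num [integral_exp]
    have h2 : (∫ y in (0:ℝ)..1, (Real.exp y - Real.exp (1 - y)))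
        = 0 := by
      rw [intervalIntegral.integral_sub (Real.continuous_exp.intervalIntegrable _ _)
        ((by continuity : Continuous fun y : ℝ => Real.exp (1 - y)).intervalIntegrable _ _)]
      rw [integral_exp, h1]
      ring
    calc (∫ y in (0:ℝ)..1, K y)
        = (∫ y in (0:ℝ)..1, (Real.exp y - Real.exp (1 - y))) / (2 * (Real.exp 1 - 1)) := by
          simp [hK, intervalIntegral.integral_div]
      _ = 0 := by rw [h2]; simp
  have key : -∫ y in (0:ℝ)..1, K y * w (x - y)
      = ∫ y in (0:ℝ)..1, K y * (c - w (x - y)) := by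
    have : (∫ y in (0:ℝ)..1, K y * (c - w (x - y)))
        = (∫ y in (0:ℝ)..1, K y * c) - ∫ y in (0:ℝ)..1, K y * w (x - y) := by
      rw [← intervalIntegral.integral_sub (hiK.mul_const c) hiKw]
      congr 1; ext y; ring
    rw [this, intervalIntegral.integral_mul_const, hK0]
    ring
  rw [key]
  have hbound : ∀ y ∈ Set.Icc (0:ℝ) 1, K y * (c - w (x - y)) ≤ (m₂ - m₁) / 4 := by
    intro y hy
    have hE : (1:ℝ) < Real.exp 1 := by
      have := Real.add_one_lt_exp (x := 1) one_ne_zero; linarith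
    have hKb : |K y| ≤ 1 / 2 := by
      have h1 : Real.exp y ≤ Real.exp 1 := Real.exp_le_exp.2 hy.2
      have h2 : (1:ℝ) ≤ Real.exp (1 - y) := by
        have : (0:ℝ) ≤ 1 - y := by linarith [hy.2]
        simpa using Real.one_le_exp this
      have h3 : Real.exp (1 - y) ≤ Real.exp 1 := Real.exp_le_exp.2 (by linarith [hy.1])
      have h4 : (1:ℝ) ≤ Real.exp y := Real.one_le_exp hy.1
      have habs : |Real.exp y - Real.exp (1 - y)| ≤ Real.exp 1 - 1 := by
        rw [abs_le]; constructor <;> linarith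
      rw [hK]
      rw [abs_div]
      rw [abs_of_pos (by linarith : (0:ℝ) < 2 * (Real.exp 1 - 1))]
      rw [div_le_div_iff₀ (by linarith) (by norm_num)]
      linarith
    have hcw : |c - w (x - y)| ≤ (m₂ - m₁) / 2 := by
      have := hb (x - y)
      rw [abs_le, hc]; constructor <;> [linarith [this.2]; linarith [this.1]]
    calc K y * (c - w (x - y)) ≤ |K y * (c - w (x - y))| := le_abs_self _
      _ = |K y| * |c - w (x - y)| := abs_mul _ _
      _ ≤ (1/2) * ((m₂ - m₁) / 2) := by
          apply mul_le_mul hKb hcw (abs_nonneg _) (by norm_num)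
      _ = (m₂ - m₁) / 4 := by ring
  have hle : (∫ y in (0:ℝ)..1, K y * (c - w (x - y)))
      ≤ ∫ _ in (0:ℝ)..1, (m₂ - m₁) / 4 := by
    apply intervalIntegral.integral_mono_on (by norm_num)
      ((hKcont.mul (continuous_const.sub hwcont)).intervalIntegrable _ _)
      (intervalIntegrable_const) hbound
  simp only [intervalIntegral.integral_const, smul_eq_mul, sub_zero, one_mul] at hle
  linarith
end

section
/- Let w : ℝ → ℝ be continuously differentiable and 1-periodic. Then for every x ∈ ℝ, |∫_0^1 K(y) w'(x - y) dy| ≤ (∫_0^1 w(y)² dy)^{1/2}, where K(y) = (e^y + e^{1-y})/(2(e-1)) for y ∈ [0,1). -/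
open MeasureTheory

/-- Cauchy–Schwarz for continuous functions on `[0,1]`. -/
lemma cauchy_schwarz_cont (f g : ℝ → ℝ) (hf : Continuous f) (hg : Continuous g) :
    |∫ y in (0:ℝ)..1, f y * g y|
      ≤ Real.sqrt (∫ y in (0:ℝ)..1, f y ^ 2) * Real.sqrt (∫ y in (0:ℝ)..1, g y ^ 2) := by
  have h01 : (0:ℝ) ≤ 1 := by norm_num
  rw [intervalIntegral.integral_of_le h01, intervalIntegral.integral_of_le h01,
    intervalIntegral.integral_of_le h01]
  set μ := volume.restrict (Set.Ioc (0:ℝ) 1) with hμ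
  haveI : IsFiniteMeasure μ := ⟨by simp [hμ, Measure.restrict_apply_univ, Real.volume_Ioc]⟩
  have hmem : ∀ h : ℝ → ℝ, Continuous h → MemLp h (ENNReal.ofReal 2) μ := by
    intro h hc
    obtain ⟨C, hC⟩ := (isCompact_Icc (a := (0:ℝ)) (b := 1)).exists_bound_of_continuousOn
      hc.continuousOn
    refine MemLp.of_bound hc.aestronglyMeasurable C ?_
    rw [hμ]
    exact (ae_restrict_iff' measurableSet_Ioc).2
      (Filter.Eventually.of_forall fun y hy => hC y (Set.Ioc_subset_Icc_self hy))
  have hpq : Real.HolderConjugate 2 2 := Real.HolderConjugate.two_two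
  have key := MeasureTheory.integral_mul_norm_le_Lp_mul_Lq hpq (hmem f hf) (hmem g hg)
  have hconv : ∀ h : ℝ → ℝ,
      (∫ y, ‖h y‖ ^ (2:ℝ) ∂μ) ^ (1/(2:ℝ)) = Real.sqrt (∫ y, h y ^ 2 ∂μ) := by
    intro h
    rw [Real.sqrt_eq_rpow]
    congr 1
    refine integral_congr_ae (Filter.Eventually.of_forall fun y => ?_)
    show ‖h y‖ ^ (2:ℝ) = h y ^ 2
    rw [show (2:ℝ) = ((2:ℕ):ℝ) by norm_num, Real.rpow_natCast, Real.norm_eq_abs, sq_abs]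
  calc |∫ y, f y * g y ∂μ| ≤ ∫ y, ‖f y * g y‖ ∂μ := by
        simpa using norm_integral_le_integral_norm (fun y => f y * g y) (μ := μ)
    _ = ∫ y, ‖f y‖ * ‖g y‖ ∂μ := by simp [norm_mul]
    _ ≤ (∫ y, ‖f y‖ ^ (2:ℝ) ∂μ) ^ (1/(2:ℝ)) * (∫ y, ‖g y‖ ^ (2:ℝ) ∂μ) ^ (1/(2:ℝ)) := key
    _ = Real.sqrt (∫ y, f y ^ 2 ∂μ) * Real.sqrt (∫ y, g y ^ 2 ∂μ) := by
        rw [hconv f, hconv g]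

/-- If `w` is continuously differentiable (with derivative `w'`) and 1-periodic, then
for every `x`, `|∫_0^1 K(y) w'(x-y) dy| ≤ (∫_0^1 w(y)² dy)^{1/2}`, where
`K(y) = (e^y + e^{1-y}) / (2(e-1))` on `[0,1)`. -/
theorem abs_integral_kernel_convolution_le (w w' : ℝ → ℝ)
    (hderiv : ∀ x : ℝ, HasDerivAt w (w' x) x) (hw' : Continuous w')
    (hper : ∀ x : ℝ, w (x + 1) = w x) (x : ℝ) :
    |∫ y in (0:ℝ)..1,
        ((Real.exp y + Real.exp (1 - y)) / (2 * (Real.exp 1 - 1))) * w' (x - y)|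
      ≤ Real.sqrt (∫ y in (0:ℝ)..1, (w y) ^ 2) := by
  have hE : (1:ℝ) < Real.exp 1 := by
    have := Real.add_one_lt_exp (x := 1) one_ne_zero
    linarith
  have hc : (0:ℝ) < 2 * (Real.exp 1 - 1) := by linarith
  set K : ℝ → ℝ := fun y => (Real.exp y + Real.exp (1 - y)) / (2 * (Real.exp 1 - 1)) with hK
  set K' : ℝ → ℝ := fun y => (Real.exp y - Real.exp (1 - y)) / (2 * (Real.exp 1 - 1)) with hK'
  have hwcont : Continuous w := by
    rw [continuous_iff_continuousAt]; exact fun t => (hderiv t).continuousAt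
  -- derivative facts
  have hKderiv : ∀ y : ℝ, HasDerivAt K (K' y) y := by
    intro y
    have h1 : HasDerivAt (fun y : ℝ => 1 - y) (-1) y := by
      simpa using (hasDerivAt_id y).const_sub (1:ℝ)
    have h2 : HasDerivAt (fun y : ℝ => Real.exp (1 - y)) (Real.exp (1 - y) * (-1)) y :=
      (Real.hasDerivAt_exp (1 - y)).comp y h1
    have h3 : HasDerivAt (fun y : ℝ => Real.exp y + Real.exp (1 - y))
        (Real.exp y + Real.exp (1 - y) * (-1)) y := (Real.hasDerivAt_exp y).add h2
    have := h3.div_const (2 * (Real.exp 1 - 1))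
    simpa [hK, hK'] using this.congr_deriv (by ring)
  have hvderiv : ∀ y : ℝ, HasDerivAt (fun y => -w (x - y)) (w' (x - y)) y := by
    intro y
    have h1 : HasDerivAt (fun y : ℝ => x - y) (-1) y := by
      simpa using (hasDerivAt_id y).const_sub x
    have h2 : HasDerivAt (fun y : ℝ => w (x - y)) (w' (x - y) * (-1)) y :=
      (hderiv (x - y)).comp y h1
    exact h2.neg.congr_deriv (by ring)
  -- integration by parts
  have hK'cont : Continuous K' := by
    rw [hK']; continuity
  have ibp : (∫ y in (0:ℝ)..1, K y * w' (x - y)) = ∫ y in (0:ℝ)..1, K' y * w (x - y) := by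
    have hu' : IntervalIntegrable K' MeasureTheory.volume 0 1 := hK'cont.intervalIntegrable 0 1
    have hv' : IntervalIntegrable (fun y => w' (x - y)) MeasureTheory.volume 0 1 :=
      (hw'.comp (continuous_const.sub continuous_id)).intervalIntegrable 0 1
    have ibp' := intervalIntegral.integral_mul_deriv_eq_deriv_mul
      (u := K) (u' := K') (v := fun y => -w (x - y)) (v' := fun y => w' (x - y))
      (fun y _ => hKderiv y) (fun y _ => hvderiv y) hu' hv'
    beta_reduce at ibp'
    have hw1 : w (x - 1) = w x := by
      have h := hper (x - 1)
      rw [show x - 1 + 1 = x by ring] at h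
      exact h.symm
    have hK01 : K 1 = K 0 := by
      simp only [hK]
      rw [sub_self, Real.exp_zero, sub_zero]
      ring
    have hneg : (∫ y in (0:ℝ)..1, K' y * -w (x - y)) = -∫ y in (0:ℝ)..1, K' y * w (x - y) := by
      rw [← intervalIntegral.integral_neg]
      congr 1; funext y; ring
    rw [ibp', hneg, hK01, hw1, sub_zero]
    ring
  rw [ibp]
  -- Cauchy–Schwarz
  have hgc : Continuous fun y => w (x - y) :=
    hwcont.comp (continuous_const.sub continuous_id)
  have cs := cauchy_schwarz_cont K' (fun y => w (x - y)) hK'cont hgc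
  -- the second factor equals the periodic integral
  have hper2 : Function.Periodic (fun t => w t ^ 2) 1 := fun t => by simp [hper t]
  have hshift : (∫ y in (0:ℝ)..1, w (x - y) ^ 2) = ∫ y in (0:ℝ)..1, w y ^ 2 := by
    have h1 : (∫ y in (0:ℝ)..1, w (x - y) ^ 2) = ∫ y in (x - 1)..(x - 0), w y ^ 2 :=
      intervalIntegral.integral_comp_sub_left (fun y => w y ^ 2) x
    rw [h1, sub_zero]
    have h2 := hper2.intervalIntegral_add_eq (x - 1) 0
    rw [show x - 1 + 1 = x by ring, zero_add] at h2
    exact h2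
  -- bound on the kernel factor
  have hK'bound : Real.sqrt (∫ y in (0:ℝ)..1, K' y ^ 2) ≤ 1 := by
    have hpt : ∀ y ∈ Set.Icc (0:ℝ) 1, K' y ^ 2 ≤ 1 / 4 := by
      intro y hy
      have ha1 : (1:ℝ) ≤ Real.exp y := Real.one_le_exp hy.1
      have ha2 : Real.exp y ≤ Real.exp 1 := Real.exp_le_exp.2 hy.2
      have hb1 : (1:ℝ) ≤ Real.exp (1 - y) := Real.one_le_exp (by linarith [hy.2])
      have hb2 : Real.exp (1 - y) ≤ Real.exp 1 := Real.exp_le_exp.2 (by linarith [hy.1])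
      rw [hK']
      rw [div_pow, div_le_iff₀ (by positivity)]
      nlinarith [mul_nonneg (sub_nonneg.2 ha1) (sub_nonneg.2 hb2),
        mul_nonneg (sub_nonneg.2 hb1) (sub_nonneg.2 ha2)]
    have hint : (∫ y in (0:ℝ)..1, K' y ^ 2) ≤ ∫ _y in (0:ℝ)..1, (1/4 : ℝ) := by
      apply intervalIntegral.integral_mono_on (by norm_num)
        ((hK'cont.pow 2).intervalIntegrable 0 1) (intervalIntegrable_const) hpt
    have : (∫ _y in (0:ℝ)..1, (1/4 : ℝ)) = 1/4 := by simp
    rw [this] at hint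
    calc Real.sqrt (∫ y in (0:ℝ)..1, K' y ^ 2) ≤ Real.sqrt (1/4) := Real.sqrt_le_sqrt hint
      _ ≤ 1 := by
          rw [show (1/4 : ℝ) = (1/2)^2 by norm_num, Real.sqrt_sq (by norm_num)]
          norm_num
  calc |∫ y in (0:ℝ)..1, K' y * w (x - y)|
      ≤ Real.sqrt (∫ y in (0:ℝ)..1, K' y ^ 2) *
          Real.sqrt (∫ y in (0:ℝ)..1, w (x - y) ^ 2) := cs
    _ ≤ 1 * Real.sqrt (∫ y in (0:ℝ)..1, w (x - y) ^ 2) :=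
        mul_le_mul_of_nonneg_right hK'bound (Real.sqrt_nonneg _)
    _ = Real.sqrt (∫ y in (0:ℝ)..1, w y ^ 2) := by rw [one_mul, hshift]
end

section
/- Let T > 0 and let w : ℝ × [0,T) → ℝ be continuous, 1-periodic in the first variable, with continuous partial derivative ∂_t w on ℝ × [0,T). Define m(t) := min_{x∈[0,1]} w(x,t). Then m is locally Lipschitz continuous on [0,T), and for almost every t ∈ (0,T) the function m is differentiable at t, and for every ξ ∈ [0,1] with w(ξ,t) = m(t) one has m'(t) = ∂_t w(ξ,t). -/
open MeasureTheory

section AuxMinEvolution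
open Set

lemma aux_min_ex (T : ℝ) (w : ℝ → ℝ → ℝ)
    (hw : ContinuousOn (fun p : ℝ × ℝ => w p.1 p.2) (Set.univ ×ˢ Set.Ico 0 T))
    (m : ℝ → ℝ) (hm : ∀ t : ℝ, m t = sInf ((fun x => w x t) '' Set.Icc (0 : ℝ) 1))
    {t : ℝ} (ht : t ∈ Set.Ico (0:ℝ) T) :
    (∀ x ∈ Icc (0:ℝ) 1, m t ≤ w x t) ∧ ∃ ξ ∈ Icc (0:ℝ) 1, w ξ t = m t := by
  have hc : ContinuousOn (fun x => w x t) (Icc (0:ℝ) 1) := by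
    have : ContinuousOn (fun x : ℝ => ((x, t) : ℝ × ℝ)) (Icc (0:ℝ) 1) :=
      (continuous_id.prodMk continuous_const).continuousOn
    exact hw.comp this (fun x _ => ⟨trivial, ht⟩)
  obtain ⟨ξ, hξ, hmin⟩ := isCompact_Icc.exists_isMinOn ⟨0, by norm_num⟩ hc
  have hleast : IsLeast ((fun x => w x t) '' Icc (0:ℝ) 1) (w ξ t) :=
    ⟨⟨ξ, hξ, rfl⟩, by rintro y ⟨x, hx, rfl⟩; exact hmin hx⟩
  have hmt : m t = w ξ t := by rw [hm t, hleast.csInf_eq]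
  exact ⟨fun x hx => hmt ▸ hmin hx, ξ, hξ, hmt.symm⟩

lemma aux_lip (T : ℝ) (hT : 0 < T) (w wt : ℝ → ℝ → ℝ)
    (hw : ContinuousOn (fun p : ℝ × ℝ => w p.1 p.2) (Set.univ ×ˢ Set.Ico 0 T))
    (hwt : ∀ x : ℝ, ∀ t ∈ Set.Ico (0 : ℝ) T,
      HasDerivWithinAt (fun t' => w x t') (wt x t) (Set.Ico 0 T) t)
    (hwtc : ContinuousOn (fun p : ℝ × ℝ => wt p.1 p.2) (Set.univ ×ˢ Set.Ico 0 T))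
    (m : ℝ → ℝ) (hm : ∀ t : ℝ, m t = sInf ((fun x => w x t) '' Set.Icc (0 : ℝ) 1))
    {b : ℝ} (hb : b < T) : ∃ L : NNReal, LipschitzOnWith L m (Set.Icc 0 b) := by
  rcases lt_or_ge b 0 with h | hb0
  · exact ⟨1, by simp [Icc_eq_empty_of_lt h]⟩
  have hsub : Icc (0:ℝ) b ⊆ Ico 0 T := fun s hs => ⟨hs.1, lt_of_le_of_lt hs.2 hb⟩
  -- bound on wt
  have hK : IsCompact (Icc (0:ℝ) 1 ×ˢ Icc (0:ℝ) b) := isCompact_Icc.prod isCompact_Icc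
  have hwtc' : ContinuousOn (fun p : ℝ × ℝ => wt p.1 p.2) (Icc (0:ℝ) 1 ×ˢ Icc (0:ℝ) b) :=
    hwtc.mono (fun p hp => ⟨trivial, hsub hp.2⟩)
  obtain ⟨C, hC⟩ := hK.exists_bound_of_continuousOn hwtc'
  have hC0 : 0 ≤ C := le_trans (norm_nonneg _) (hC (0, 0) ⟨⟨le_refl _, by norm_num⟩, ⟨le_refl _, hb0⟩⟩)
  refine ⟨C.toNNReal, LipschitzOnWith.of_dist_le_mul fun s hs u hu => ?_⟩
  -- each w x is Lipschitz in t with constant C on Icc 0 b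
  have lipw : ∀ x ∈ Icc (0:ℝ) 1, LipschitzOnWith C.toNNReal (fun t' => w x t') (Icc 0 b) := by
    intro x hx
    apply (convex_Icc (0:ℝ) b).lipschitzOnWith_of_nnnorm_hasDerivWithin_le
      (f' := fun t' => wt x t')
    · intro s hs
      exact (hwt x s (hsub hs)).mono hsub
    · intro s hs
      have := hC (x, s) ⟨hx, hs⟩
      rwa [← NNReal.coe_le_coe, coe_nnnorm, Real.coe_toNNReal _ hC0]
  have key : ∀ s ∈ Icc (0:ℝ) b, ∀ u ∈ Icc (0:ℝ) b, m s - m u ≤ C * dist s u := by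
    intro s hs u hu
    obtain ⟨_, ξ, hξ, hwξ⟩ := aux_min_ex T w hw m hm (hsub hu)
    obtain ⟨hles, _⟩ := aux_min_ex T w hw m hm (hsub hs)
    have h1 : m s ≤ w ξ s := hles ξ hξ
    have h2 : dist (w ξ s) (w ξ u) ≤ C * dist s u := by
      have := lipw ξ hξ hs hu
      rwa [edist_dist, edist_dist, ENNReal.ofReal_le_iff_le_toReal (by
        exact (ENNReal.mul_lt_top ENNReal.coe_lt_top (ENNReal.ofReal_lt_top)).ne),
        ENNReal.toReal_mul, ENNReal.coe_toReal, Real.coe_toNNReal _ hC0,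
        ENNReal.toReal_ofReal dist_nonneg] at this
    calc m s - m u ≤ w ξ s - w ξ u := by
          rw [← hwξ]; linarith
      _ ≤ |w ξ s - w ξ u| := le_abs_self _
      _ ≤ C * dist s u := by rwa [Real.dist_eq] at h2
  rw [Real.dist_eq, Real.coe_toNNReal _ hC0, abs_sub_le_iff]
  constructor
  · exact key s hs u hu
  · simpa [dist_comm] using key u hu s hs

end AuxMinEvolution

section
open Set
/-- Extremum-evolution lemma (periodic version): if `w(·,t)` is continuous and
1-periodic in `x`, with continuous time derivative `wt` on `ℝ × [0,T)`, then
`m(t) = min_{x ∈ [0,1]} w(x,t)` is locally Lipschitz on `[0,T)` and for a.e.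
`t ∈ (0,T)` it is differentiable with `m'(t) = wt(ξ,t)` at any minimizing `ξ`. -/
theorem min_evolution_lemma (T : ℝ) (hT : 0 < T) (w wt : ℝ → ℝ → ℝ)
    (hw : ContinuousOn (fun p : ℝ × ℝ => w p.1 p.2) (Set.univ ×ˢ Set.Ico 0 T))
    (hper : ∀ x : ℝ, ∀ t ∈ Set.Ico (0 : ℝ) T, w (x + 1) t = w x t)
    (hwt : ∀ x : ℝ, ∀ t ∈ Set.Ico (0 : ℝ) T,
      HasDerivWithinAt (fun t' => w x t') (wt x t) (Set.Ico 0 T) t)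
    (hwtc : ContinuousOn (fun p : ℝ × ℝ => wt p.1 p.2) (Set.univ ×ˢ Set.Ico 0 T))
    (m : ℝ → ℝ) (hm : ∀ t : ℝ, m t = sInf ((fun x => w x t) '' Set.Icc (0 : ℝ) 1)) :
    (∀ b : ℝ, b < T → ∃ L : NNReal, LipschitzOnWith L m (Set.Icc 0 b)) ∧
    (∀ᵐ t ∂(volume : Measure ℝ), t ∈ Set.Ioo (0 : ℝ) T →
      ∃ m' : ℝ, HasDerivAt m m' t ∧
        ∀ ξ ∈ Set.Icc (0 : ℝ) 1, w ξ t = m t → m' = wt ξ t) := by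
  refine ⟨fun b hb => aux_lip T hT w wt hw hwt hwtc m hm hb, ?_⟩
  -- a.e. differentiability on each Ioo 0 (T - T/(n+1))
  have hdiff : ∀ n : ℕ, ∀ᵐ t ∂(volume : Measure ℝ),
      t ∈ Ioo (0:ℝ) (T - T/(n+1)) → DifferentiableAt ℝ m t := by
    intro n
    have hbT : T - T/(n+1) < T := by
      have : (0:ℝ) < T/(n+1) := div_pos hT (by positivity)
      linarith
    obtain ⟨L, hL⟩ := aux_lip T hT w wt hw hwt hwtc m hm hbT
    obtain ⟨g, hg, heq⟩ := hL.extend_real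
    filter_upwards [hg.ae_differentiableAt] with t hgt hti
    have hmem : Icc (0:ℝ) (T - T/(n+1)) ∈ nhds t := Icc_mem_nhds hti.1 hti.2
    have : m =ᶠ[nhds t] g := Filter.eventuallyEq_of_mem hmem heq
    exact (this.differentiableAt_iff).mpr hgt
  rw [← ae_all_iff] at hdiff
  filter_upwards [hdiff] with t hdt ht
  obtain ⟨n, hn⟩ := exists_nat_gt (T / (T - t))
  have hTt : 0 < T - t := by linarith [ht.2]
  have htb : t ∈ Ioo (0:ℝ) (T - T/(n+1)) := by
    refine ⟨ht.1, ?_⟩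
    have h1 : T / (T - t) < (n:ℝ) + 1 := lt_of_lt_of_le hn (by norm_num)
    have h2 : T / ((n:ℝ)+1) < T - t := by
      rw [div_lt_iff₀ (by positivity)]
      rw [div_lt_iff₀ hTt] at h1
      linarith
    linarith
  have hdm : DifferentiableAt ℝ m t := hdt n htb
  refine ⟨deriv m t, hdm.hasDerivAt, fun ξ hξ hwξ => ?_⟩
  have hnt : Ico (0:ℝ) T ∈ nhds t := Ico_mem_nhds ht.1 ht.2
  have hdw : HasDerivAt (fun t' => w ξ t') (wt ξ t) t :=
    (hwt ξ t ⟨le_of_lt ht.1, ht.2⟩).hasDerivAt hnt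
  have hdg : HasDerivAt (fun s => w ξ s - m s) (wt ξ t - deriv m t) t :=
    hdw.sub hdm.hasDerivAt
  have hloc : IsLocalMin (fun s => w ξ s - m s) t := by
    filter_upwards [hnt] with s hs
    have := (aux_min_ex T w hw m hm hs).1 ξ hξ
    simp only [hwξ]
    linarith
  have := hloc.hasDerivAt_eq_zero hdg
  linarith

end
end

section
/- Let T > 0 and let a, b : [0,T) → ℝ be locally Lipschitz functions with a(t) ≤ b(t) for all t, satisfying a'(t) + b'(t) ≤ (b(t) - a(t))(1 + (3/2)(a(t) + b(t))) - 3 b(t)² for almost every t ∈ (0,T). If 1 + (3/2)(a(0) + b(0)) < 0, then 1 + (3/2)(a(t) + b(t)) < 0 for every t ∈ [0,T). -/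
open MeasureTheory

/-- A Lipschitz function on `[0,c]` has a derivative at almost every interior point. -/
lemma aux_ae_hasDerivAt {f : ℝ → ℝ} {c : ℝ} {L : NNReal}
    (hf : LipschitzOnWith L f (Set.Icc 0 c)) :
    ∀ᵐ t ∂(volume : Measure ℝ), t ∈ Set.Ioo (0 : ℝ) c → ∃ d, HasDerivAt f d t := by
  obtain ⟨F, hF, hEq⟩ := hf.extend_real
  filter_upwards [hF.ae_differentiableAt (μ := volume)] with t ht hto
  refine ⟨deriv F t, ?_⟩
  have hFd : HasDerivAt F (deriv F t) t := ht.hasDerivAt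
  have hnb : Set.Icc (0 : ℝ) c ∈ nhds t := Icc_mem_nhds hto.1 hto.2
  exact hFd.congr_of_eventuallyEq (by filter_upwards [hnb] with s hs using hEq hs)

/-- Key lemma: a Lipschitz function on `[x,y]` whose derivative is `≤ 0` at almost
every interior point of differentiability satisfies `g y ≤ g x`. -/
lemma aux_decreasing {g : ℝ → ℝ} {L : NNReal} {x y : ℝ} (hxy : x ≤ y)
    (hg : LipschitzOnWith L g (Set.Icc x y))
    (hd : ∀ᵐ t ∂(volume : Measure ℝ), t ∈ Set.Ioo x y → ∀ d, HasDerivAt g d t → d ≤ 0) :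
    g y ≤ g x := by
  obtain ⟨G, hG, hEq⟩ := hg.extend_real
  -- the good property holds a.e.
  have hae : ∀ᵐ t ∂(volume : Measure ℝ),
      t ∈ Set.Ioo x y → DifferentiableAt ℝ G t ∧ deriv G t ≤ 0 := by
    filter_upwards [hG.ae_differentiableAt (μ := volume), hd] with t ht hdt hto
    refine ⟨ht, ?_⟩
    have hFd : HasDerivAt G (deriv G t) t := ht.hasDerivAt
    have hnb : Set.Icc x y ∈ nhds t := Icc_mem_nhds hto.1 hto.2
    have : HasDerivAt g (deriv G t) t :=
      hFd.congr_of_eventuallyEq (by filter_upwards [hnb] with s hs using hEq hs)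
    exact hdt hto _ this
  have hGy : g y = G y := hEq ⟨hxy, le_rfl⟩
  have hGx : g x = G x := hEq ⟨le_rfl, hxy⟩
  rw [hGy, hGx]
  -- main estimate
  have main : ∀ ε > (0:ℝ), ∀ δ > (0:ℝ), G y - G x ≤ δ * (y - x) + 2 * L * ε := by
    intro ε hε δ hδ
    set N : Set ℝ :=
      {t | ¬ (t ∈ Set.Ioo x y → DifferentiableAt ℝ G t ∧ deriv G t ≤ 0)} ∪ {x} with hN
    have hNnull : volume N = 0 := by
      apply measure_union_null _ (measure_singleton x)
      exact hae
    obtain ⟨U, hNU, hUopen, hUmeas⟩ :=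
      Set.exists_isOpen_lt_of_lt N (ENNReal.ofReal ε)
        (by rw [hNnull]; exact ENNReal.ofReal_pos.2 hε)
    have hUfin : volume U ≠ ⊤ := (hUmeas.trans ENNReal.ofReal_lt_top).ne
    set m : ℝ → ℝ := fun t => (volume (U ∩ Set.Ioc x t)).toReal with hm
    have hfin : ∀ t, volume (U ∩ Set.Ioc x t) ≠ ⊤ :=
      fun t => ((measure_mono Set.inter_subset_left).trans_lt
        (lt_of_lt_of_le hUmeas le_top)).ne
    have hfin' : ∀ t, volume (U ∩ Set.Ioc x t) ≠ ⊤ := by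
      intro t
      exact ((measure_mono Set.inter_subset_left).trans_lt hUfin.lt_top).ne
    have m_mono : ∀ ⦃s t : ℝ⦄, s ≤ t → m s ≤ m t := by
      intro s t hst
      exact ENNReal.toReal_mono (hfin' t)
        (measure_mono (Set.inter_subset_inter_right _ (Set.Ioc_subset_Ioc_right hst)))
    have m_lip : ∀ ⦃s t : ℝ⦄, s ≤ t → m t ≤ m s + (t - s) := by
      intro s t hst
      have hsub : U ∩ Set.Ioc x t ⊆ (U ∩ Set.Ioc x s) ∪ Set.Ioc s t := by
        rintro u ⟨huU, hxu, hut⟩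
        rcases le_or_gt u s with h | h
        · exact Or.inl ⟨huU, hxu, h⟩
        · exact Or.inr ⟨h, hut⟩
      calc m t ≤ ((volume (U ∩ Set.Ioc x s)) + volume (Set.Ioc s t)).toReal := by
            refine ENNReal.toReal_mono ?_ ((measure_mono hsub).trans (measure_union_le _ _))
            simp [ENNReal.add_ne_top, hfin' s, measure_Ioc_lt_top.ne]
        _ = m s + (t - s) := by
            rw [ENNReal.toReal_add (hfin' s) measure_Ioc_lt_top.ne,
              Real.volume_Ioc, ENNReal.toReal_ofReal (by linarith)]
    have m_cont : Continuous m := by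
      refine LipschitzWith.continuous (K := 1) (LipschitzWith.of_dist_le_mul fun s t => ?_)
      simp only [Real.dist_eq, NNReal.coe_one, one_mul]
      rcases le_total s t with h | h
      · rw [abs_sub_comm, abs_of_nonneg (by linarith [m_mono h]), abs_of_nonpos (by linarith)]
        have := m_lip h; linarith
      · rw [abs_of_nonneg (by linarith [m_mono h]), abs_of_nonneg (by linarith)]
        have := m_lip h; linarith
    have m_superadd : ∀ ⦃t z : ℝ⦄, x ≤ t → t ≤ z → Set.Ioc t z ⊆ U →
        m t + (z - t) ≤ m z := by
      intro t z hxt htz hIU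
      have hdisj : Disjoint (U ∩ Set.Ioc x t) (Set.Ioc t z) := by
        refine Set.disjoint_left.2 ?_
        rintro u ⟨_, _, hut⟩ ⟨htu, _⟩
        exact absurd hut (not_le.2 htu)
      have hsub : (U ∩ Set.Ioc x t) ∪ Set.Ioc t z ⊆ U ∩ Set.Ioc x z := by
        rintro u (⟨huU, hxu, hut⟩ | hu)
        · exact ⟨huU, hxu, hut.trans htz⟩
        · exact ⟨hIU hu, lt_of_le_of_lt hxt hu.1, hu.2⟩
      have := measure_mono (μ := volume) hsub
      rw [measure_union hdisj measurableSet_Ioc] at this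
      have h2 : ((volume (U ∩ Set.Ioc x t)) + volume (Set.Ioc t z)).toReal
          ≤ m z := ENNReal.toReal_mono (hfin' z) this
      rwa [ENNReal.toReal_add (hfin' t) measure_Ioc_lt_top.ne, Real.volume_Ioc,
        ENNReal.toReal_ofReal (by linarith)] at h2
    have hL0 : (0:ℝ) ≤ (L : ℝ) := L.coe_nonneg
    -- continuous induction
    set S : Set ℝ := {t | G t - G x ≤ δ * (t - x) + 2 * L * m t} with hS
    have hSclosed : IsClosed S := by
      apply isClosed_le
      · exact (hG.continuous.sub continuous_const)
      · exact ((continuous_const.mul (continuous_id.sub continuous_const)).add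
          (continuous_const.mul m_cont))
    have hxS : x ∈ S := by
      have : m x = 0 := by simp [hm]
      simp [hS, this]
    have hstep : ∀ t ∈ S ∩ Set.Ico x y, ∀ z ∈ Set.Ioi t, (S ∩ Set.Ioc t z).Nonempty := by
      rintro t ⟨htS, hxt, hty⟩ z (htz : t < z)
      by_cases htU : t ∈ U
      · -- inside the open set: use the measure gain
        obtain ⟨r, hr, hball⟩ := Metric.isOpen_iff.1 hUopen t htU
        set z' : ℝ := min z (t + r / 2) with hz'
        have htz' : t < z' := lt_min htz (by linarith)
        have hz'z : z' ≤ z := min_le_left _ _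
        have hIU : Set.Ioc t z' ⊆ U := by
          intro u hu
          apply hball
          rw [Metric.mem_ball, Real.dist_eq, abs_of_pos (by linarith [hu.1])]
          have : u ≤ t + r / 2 := hu.2.trans (min_le_right _ _)
          linarith
        have hms := m_superadd hxt htz'.le hIU
        have hGl : G z' - G t ≤ (L : ℝ) * (z' - t) := by
          have hdist := hG.dist_le_mul z' t
          rw [Real.dist_eq, Real.dist_eq] at hdist
          have h2 : G z' - G t ≤ (L : ℝ) * |z' - t| := (le_abs_self _).trans hdist
          rwa [abs_of_pos (by linarith : (0:ℝ) < z' - t)] at h2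
        refine ⟨z', ?_, htz', hz'z⟩
        have hmm : m t ≤ m z' := m_mono htz'.le
        simp only [hS, Set.mem_setOf_eq] at htS ⊢
        nlinarith
      · -- outside: use the derivative bound
        have htN : t ∉ N := fun h => htU (hNU h)
        have htx : t ≠ x := by
          intro h; exact htN (Or.inr (by simp [h]))
        have htIoo : t ∈ Set.Ioo x y := ⟨lt_of_le_of_ne hxt (Ne.symm htx), hty⟩
        have hgood : DifferentiableAt ℝ G t ∧ deriv G t ≤ 0 := by
          by_contra h
          exact htN (Set.mem_union_left _
            (by simpa only [Set.mem_setOf_eq] using fun himp => h (himp htIoo)))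
        have hder : HasDerivAt G (deriv G t) t := hgood.1.hasDerivAt
        have hslope : Filter.Tendsto (slope G t) (nhdsWithin t {t}ᶜ) (nhds (deriv G t)) :=
          hasDerivAt_iff_tendsto_slope.1 hder
        have hslope' : Filter.Tendsto (slope G t) (nhdsWithin t (Set.Ioi t))
            (nhds (deriv G t)) :=
          hslope.mono_left (nhdsWithin_mono t fun u hu => ne_of_gt hu)
        have hev : ∀ᶠ u in nhdsWithin t (Set.Ioi t), slope G t u < δ :=
          hslope'.eventually_lt_const (lt_of_le_of_lt hgood.2 hδ)
        have hmem : Set.Ioc t z ∈ nhdsWithin t (Set.Ioi t) :=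
          Ioc_mem_nhdsGT_of_mem ⟨le_refl t, htz⟩
        have hev2 : ∀ᶠ u in nhdsWithin t (Set.Ioi t), u ∈ Set.Ioc t z :=
          Filter.eventually_of_mem hmem fun u hu => hu
        obtain ⟨z', hz'slope, hz'Ioc⟩ := (hev.and hev2).exists
        have htz' : t < z' := hz'Ioc.1
        have hGl : G z' - G t ≤ δ * (z' - t) := by
          have : slope G t z' = (G z' - G t) / (z' - t) := by
            rw [slope_def_field]
          rw [this] at hz'slope
          have := (div_lt_iff₀ (by linarith)).1 hz'slope
          linarith
        refine ⟨z', ?_, htz', hz'Ioc.2⟩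
        have hmm : m t ≤ m z' := m_mono htz'.le
        simp only [hS, Set.mem_setOf_eq] at htS ⊢
        nlinarith
    have hyS : y ∈ S :=
      (IsClosed.Icc_subset_of_forall_exists_gt
        (hSclosed.inter isClosed_Icc) hxS hstep) ⟨hxy, le_rfl⟩
    have hmy : m y ≤ ε := by
      have h1 : volume (U ∩ Set.Ioc x y) ≤ ENNReal.ofReal ε :=
        (measure_mono Set.inter_subset_left).trans hUmeas.le
      exact ENNReal.toReal_le_of_le_ofReal hε.le h1
    simp only [hS, Set.mem_setOf_eq] at hyS
    nlinarith
  -- conclude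
  by_contra h
  push_neg at h
  have hL0 : (0:ℝ) ≤ (L : ℝ) := L.coe_nonneg
  set c : ℝ := G y - G x with hc
  have hc0 : 0 < c := by simp only [hc]; linarith
  have hyx : 0 ≤ y - x := by linarith
  set D : ℝ := (y - x) + 2 * L + 1 with hD
  have hDpos : 0 < D := by positivity
  set k : ℝ := c / (2 * D) with hk
  have hkpos : 0 < k := by positivity
  have hk2 : k * D = c / 2 := by
    rw [hk]; field_simp
  have hmain := main k hkpos k hkpos
  have hexp : k * (y - x) + 2 * L * k + k = c / 2 := by rw [← hk2, hD]; ring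
  linarith

/-- Sum of two Lipschitz-on functions is Lipschitz-on. -/
lemma aux_lip_add {f g : ℝ → ℝ} {s : Set ℝ} {K L : NNReal}
    (hf : LipschitzOnWith K f s) (hg : LipschitzOnWith L g s) :
    LipschitzOnWith (K + L) (fun t => f t + g t) s := by
  rw [lipschitzOnWith_iff_dist_le_mul] at hf hg ⊢
  intro u hu v hv
  calc dist (f u + g u) (f v + g v) ≤ dist (f u) (f v) + dist (g u) (g v) :=
        dist_add_add_le _ _ _ _
    _ ≤ K * dist u v + L * dist u v := add_le_add (hf u hu v hv) (hg u hu v hv)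
    _ = (↑(K + L)) * dist u v := by push_cast; ring

/-- Invariance of the sign condition `1 + (3/2)(a + b) < 0` under the differential
inequality `a' + b' ≤ (b - a)(1 + (3/2)(a + b)) - 3 b²` for locally Lipschitz
functions `a ≤ b` on `[0,T)`. -/
theorem sign_condition_invariant (T : ℝ) (hT : 0 < T) (a b : ℝ → ℝ)
    (ha : ∀ c : ℝ, c < T → ∃ L : NNReal, LipschitzOnWith L a (Set.Icc 0 c))
    (hb : ∀ c : ℝ, c < T → ∃ L : NNReal, LipschitzOnWith L b (Set.Icc 0 c))
    (hab : ∀ t ∈ Set.Ico (0 : ℝ) T, a t ≤ b t)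
    (hineq : ∀ᵐ t ∂(volume : Measure ℝ), t ∈ Set.Ioo (0 : ℝ) T →
      ∀ da db : ℝ, HasDerivAt a da t → HasDerivAt b db t →
        da + db ≤ (b t - a t) * (1 + (3 / 2) * (a t + b t)) - 3 * (b t) ^ 2)
    (h0 : 1 + (3 / 2) * (a 0 + b 0) < 0) :
    ∀ t ∈ Set.Ico (0 : ℝ) T, 1 + (3 / 2) * (a t + b t) < 0 := by
  rintro t₁ ⟨ht₁0, ht₁T⟩
  by_contra hcon
  push_neg at hcon
  obtain ⟨La, hLa⟩ := ha t₁ ht₁T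
  obtain ⟨Lb, hLb⟩ := hb t₁ ht₁T
  -- the set where the sign condition fails
  set S : Set ℝ := Set.Icc 0 t₁ ∩ {t | 0 ≤ 1 + (3 / 2) * (a t + b t)} with hSdef
  have hScl : IsClosed S := by
    have hcont : ContinuousOn (fun t => 1 + (3 / 2) * (a t + b t)) (Set.Icc 0 t₁) :=
      continuousOn_const.add (continuousOn_const.mul
        (hLa.continuousOn.add hLb.continuousOn))
    have : S = Set.Icc 0 t₁ ∩ (fun t => 1 + (3 / 2) * (a t + b t)) ⁻¹' Set.Ici 0 := by
      ext u; simp [hSdef, Set.mem_Ici]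
    rw [this]
    exact ContinuousOn.preimage_isClosed_of_isClosed hcont isClosed_Icc isClosed_Ici
  have hSne : S.Nonempty := ⟨t₁, ⟨ht₁0, le_rfl⟩, hcon⟩
  have hSbdd : BddBelow S := ⟨0, fun u hu => hu.1.1⟩
  set t₀ : ℝ := sInf S with ht₀
  have ht₀S : t₀ ∈ S := hScl.csInf_mem hSne hSbdd
  have ht₀0 : 0 ≤ t₀ := ht₀S.1.1
  have ht₀t₁ : t₀ ≤ t₁ := ht₀S.1.2
  have ht₀pos : 0 < t₀ := by
    rcases lt_or_eq_of_le ht₀0 with h | h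
    · exact h
    · exfalso
      have := ht₀S.2
      rw [← h] at this
      exact absurd this (not_le.2 h0)
  -- strictly negative before t₀
  have hneg : ∀ t ∈ Set.Ico (0:ℝ) t₀, 1 + (3 / 2) * (a t + b t) < 0 := by
    rintro t ⟨h0t, htt₀⟩
    by_contra h
    push_neg at h
    have : t ∈ S := ⟨⟨h0t, htt₀.le.trans ht₀t₁⟩, h⟩
    exact absurd (csInf_le hSbdd this) (not_le.2 htt₀)
  -- apply the key lemma on [0, t₀]
  have hlip : LipschitzOnWith (La + Lb) (fun t => a t + b t) (Set.Icc 0 t₀) :=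
    (aux_lip_add hLa hLb).mono (Set.Icc_subset_Icc_right ht₀t₁)

  have hkey : (fun t => a t + b t) t₀ ≤ (fun t => a t + b t) 0 := by
    apply aux_decreasing ht₀0 hlip
    filter_upwards [hineq, aux_ae_hasDerivAt hLa, aux_ae_hasDerivAt hLb]
      with t hineq_t hda_t hdb_t htIoo d hdg
    have htT : t ∈ Set.Ioo (0:ℝ) T := ⟨htIoo.1, (lt_of_lt_of_le htIoo.2 ht₀t₁).trans ht₁T⟩
    have htT' : t ∈ Set.Ioo (0:ℝ) t₁ := ⟨htIoo.1, lt_of_lt_of_le htIoo.2 ht₀t₁⟩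
    obtain ⟨da, hda⟩ := hda_t htT'
    obtain ⟨db, hdb⟩ := hdb_t htT'
    have hsum : HasDerivAt (fun t => a t + b t) (da + db) t := hda.add hdb
    have hd_eq : d = da + db := hdg.unique hsum
    have hab_t : a t ≤ b t := hab t ⟨htIoo.1.le, htT.2⟩
    have hsign : 1 + (3 / 2) * (a t + b t) < 0 := hneg t ⟨htIoo.1.le, htIoo.2⟩
    have hmain := hineq_t htT da db hda hdb
    rw [hd_eq]
    nlinarith [sq_nonneg (b t)]
  simp only at hkey
  have : 1 + (3 / 2) * (a t₀ + b t₀) < 0 := by nlinarith [ht₀S.2]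
  exact absurd ht₀S.2 (not_le.2 this)
end

section
/- Let T > 0 and let M : [0,T) → ℝ be locally Lipschitz with M(0) < 0 and M'(t) ≤ -(3/2) M(t)² for almost every t ∈ (0,T). Then M(t) < 0 for all t ∈ [0,T), 1/M(t) ≥ 1/M(0) + (3/2) t for all t ∈ [0,T), and consequently T ≤ 2/(3|M(0)|). -/
open MeasureTheory Set Filter

lemma lip_deriv_bound {f : ℝ → ℝ} {a b C : ℝ} {L : NNReal} (hab : a ≤ b)
    (hlip : LipschitzOnWith L f (Set.Icc a b))
    (hgood : ∀ᵐ t ∂(volume : Measure ℝ), t ∈ Set.Ioo a b →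
      ∃ d, HasDerivAt f d t ∧ d ≤ C) :
    ∀ x ∈ Set.Icc a b, f x - f a ≤ C * (x - a) := by
  rcases eq_or_lt_of_le hab with rfl | hab
  · intro x hx
    have : x = a := le_antisymm hx.2 hx.1
    simp [this]
  -- the bad set is null
  set E : Set ℝ := {t | t ∈ Set.Ioo a b ∧ ¬ ∃ d, HasDerivAt f d t ∧ d ≤ C} with hE
  have hEnull : volume (E ∪ {a}) = 0 := by
    have h1 : volume E = 0 := by
      have : E ⊆ {t | ¬ (t ∈ Set.Ioo a b → ∃ d, HasDerivAt f d t ∧ d ≤ C)} := by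
        rintro t ⟨ht1, ht2⟩ h
        exact ht2 (h ht1)
      exact measure_mono_null this hgood
    have h2 : volume ({a} : Set ℝ) = 0 := Real.volume_singleton
    exact le_antisymm (le_trans (measure_union_le _ _) (by simp [h1, h2])) zero_le
  -- main ε-estimate
  have main : ∀ ε : ℝ, 0 < ε → ∀ x ∈ Set.Icc a b,
      f x - f a ≤ C * (x - a) + ε * (2 * (b - a) + ((L : ℝ) + |C| + 1)) := by
    intro ε hε x hx
    obtain ⟨U, hEU, hUopen, hUsmall⟩ :=
      Set.exists_isOpen_lt_of_lt (E ∪ {a}) (ENNReal.ofReal ε)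
        (by rw [hEnull]; exact ENNReal.ofReal_pos.2 hε)
    -- shrink U
    set V : Set ℝ := U ∩ Set.Ioo (a - 1) b with hV
    have hVopen : IsOpen V := hUopen.inter isOpen_Ioo
    have hVsmall : volume V < ENNReal.ofReal ε :=
      lt_of_le_of_lt (measure_mono Set.inter_subset_left) hUsmall
    have hVfin : volume V ≠ ⊤ := (lt_of_lt_of_le hVsmall le_top).ne
    have hEV : E ∪ {a} ⊆ V := by
      intro t ht
      refine ⟨hEU ht, ?_⟩
      rcases ht with ht | ht
      · exact ⟨by linarith [ht.1.1], ht.1.2⟩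
      · rcases ht with rfl; exact ⟨by linarith, hab⟩
    set g : ℝ → ℝ := fun x => (volume (V ∩ Set.Ioc a x)).toReal with hg
    have hgfin : ∀ x, volume (V ∩ Set.Ioc a x) ≠ ⊤ := fun x =>
      (lt_of_le_of_lt (measure_mono Set.inter_subset_left) (lt_of_lt_of_le hVsmall le_top)).ne
    have hga : g a = 0 := by simp [hg]
    have hgmono : Monotone g := by
      intro x y hxy
      exact ENNReal.toReal_mono (hgfin y)
        (measure_mono (Set.inter_subset_inter_right _ (Set.Ioc_subset_Ioc_right hxy)))
    have hgadd : ∀ x y, a ≤ x → x ≤ y →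
        volume (V ∩ Set.Ioc a y) = volume (V ∩ Set.Ioc a x) + volume (V ∩ Set.Ioc x y) := by
      intro x y hax hxy
      rw [← measure_union _ (hVopen.measurableSet.inter measurableSet_Ioc)]
      · rw [← Set.inter_union_distrib_left, Set.Ioc_union_Ioc_eq_Ioc hax hxy]
      · exact (Set.Ioc_disjoint_Ioc_of_le le_rfl).mono
          Set.inter_subset_right Set.inter_subset_right
    have hgslope : ∀ x y, a ≤ x → x ≤ y → g y - g x = (volume (V ∩ Set.Ioc x y)).toReal := by
      intro x y hax hxy
      rw [hg]
      simp only
      rw [hgadd x y hax hxy, ENNReal.toReal_add (hgfin x) _]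
      · ring
      · exact (lt_of_le_of_lt (measure_mono Set.inter_subset_left)
          (lt_of_lt_of_le hVsmall le_top)).ne
    have hglipdiff : ∀ x y, a ≤ x → x ≤ y → g y - g x ≤ y - x := by
      intro x y hax hxy
      rw [hgslope x y hax hxy]
      have : volume (V ∩ Set.Ioc x y) ≤ ENNReal.ofReal (y - x) := by
        refine le_trans (measure_mono Set.inter_subset_right) ?_
        rw [Real.volume_Ioc]
      exact le_trans (ENNReal.toReal_le_of_le_ofReal (by linarith) this) le_rfl
    have hgcont : ContinuousOn g (Set.Icc a b) := by
      apply LipschitzOnWith.continuousOn (K := 1)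
      rw [lipschitzOnWith_iff_dist_le_mul]
      intro x hx y hy
      rcases le_total y x with h | h
      · rw [Real.dist_eq, Real.dist_eq, abs_of_nonneg (by linarith [hgmono h]),
          abs_of_nonneg (by linarith)]
        simpa using hglipdiff y x hy.1 h
      · rw [Real.dist_eq, Real.dist_eq, abs_of_nonpos (by linarith [hgmono h]),
          abs_of_nonpos (by linarith)]
        simpa using hglipdiff x y hx.1 h
    -- the comparison function
    set K : ℝ := (L : ℝ) + |C| + 1 with hK
    set φ : ℝ → ℝ := fun x => f x - (C + ε) * (x - a) - K * g x with hφ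
    have key : ∀ ⦃x⦄, x ∈ Set.Icc a b → φ x ≤ f a + ε * (x - a) := by
      apply image_le_of_liminf_slope_right_lt_deriv_boundary' (f' := fun _ => (0:ℝ))
        (B := fun x => f a + ε * (x - a)) (B' := fun _ => ε)
      · -- continuity of φ
        have h1 : ContinuousOn (fun x => (C + ε) * (x - a)) (Set.Icc a b) :=
          (continuous_const.mul (continuous_id.sub continuous_const)).continuousOn
        have h2 : ContinuousOn (fun x => K * g x) (Set.Icc a b) :=
          continuousOn_const.mul hgcont
        exact (hlip.continuousOn.sub h1).sub h2
      · -- slope condition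
        intro x hxab r hr
        by_cases hxV : x ∈ V
        · -- bad point: use Lipschitz bound and the penalty g
          obtain ⟨δ, hδ, hball⟩ := Metric.isOpen_iff.1 hVopen x hxV
          have hmem : Set.Ioo x (min (x + δ) b) ∈ nhdsWithin x (Set.Ioi x) :=
            Ioo_mem_nhdsGT_of_mem ⟨le_rfl, lt_min (by linarith) hxab.2⟩
          refine Filter.Eventually.frequently (Filter.eventually_of_mem hmem fun z hz => ?_)
          have hxz : x < z := hz.1
          have hzb : z ≤ b := le_of_lt (lt_of_lt_of_le hz.2 (min_le_right _ _))
          have hsub : Set.Ioc x z ⊆ V := fun w hw => hball (by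
            rw [Metric.mem_ball, Real.dist_eq, abs_of_pos (by linarith [hw.1])]
            linarith [lt_of_le_of_lt hw.2 (lt_of_lt_of_le hz.2 (min_le_left (x + δ) b))])
          have hgz : g z - g x = z - x := by
            rw [hgslope x z hxab.1 hxz.le, Set.inter_eq_right.2 hsub, Real.volume_Ioc,
              ENNReal.toReal_ofReal (by linarith)]
          have hfz : f z - f x ≤ (L : ℝ) * (z - x) := by
            have h := hlip.dist_le_mul z ⟨hxab.1.trans hxz.le, hzb⟩ x ⟨hxab.1, hxab.2.le⟩
            rw [Real.dist_eq, Real.dist_eq, abs_of_pos (show (0:ℝ) < z - x by linarith)] at h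
            linarith [le_abs_self (f z - f x)]
          rw [slope_def_field, div_lt_iff₀ (by linarith)]
          have hzx : (0:ℝ) < z - x := by linarith
          have h5 : g z = g x + (z - x) := by linarith
          have h4 : φ z - φ x = (f z - f x) - (C + ε) * (z - x) - K * (z - x) := by
            simp only [hφ, h5]; ring
          have hcoef : (L:ℝ) - (C + ε) - K ≤ -1 := by
            have h1 : -|C| ≤ C := neg_abs_le C
            simp only [hK]; linarith
          nlinarith [mul_pos hr hzx, mul_le_mul_of_nonneg_right hcoef hzx.le]
        · -- good point, differentiable with derivative ≤ C
          have hxgood : ∃ d, HasDerivAt f d x ∧ d ≤ C := by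
            by_contra h
            have hxE : x ∈ E ∪ {a} := by
              rcases eq_or_lt_of_le hxab.1 with rfl | hax
              · exact Or.inr rfl
              · exact Or.inl ⟨⟨hax, hxab.2⟩, h⟩
            exact hxV (hEV hxE)
          obtain ⟨d, hd, hdC⟩ := hxgood
          have hslope : Filter.Tendsto (slope f x) (nhdsWithin x (Set.Ioi x)) (nhds d) :=
            (hasDerivAt_iff_tendsto_slope.1 hd).mono_left
              (nhdsWithin_mono x fun z hz => ne_of_gt hz)
          have hev : ∀ᶠ z in nhdsWithin x (Set.Ioi x), slope f x z < C + ε :=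
            hslope (Iio_mem_nhds (by linarith))
          have hev2 : ∀ᶠ z in nhdsWithin x (Set.Ioi x), z ∈ Set.Ioi x :=
            eventually_mem_nhdsWithin
          refine ((hev.and hev2).mono fun z ⟨hz1, hz2⟩ => ?_).frequently
          have hxz : x < z := hz2
          rw [slope_def_field] at hz1 ⊢
          have hzx : (0:ℝ) < z - x := by linarith
          rw [div_lt_iff₀ hzx] at hz1 ⊢
          have hgm : g x ≤ g z := hgmono hxz.le
          have hKnn : (0:ℝ) ≤ K := by
            simp only [hK]; positivity
          have h4 : φ z - φ x = (f z - f x) - (C + ε) * (z - x) - K * (g z - g x) := by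
            simp only [hφ]; ring
          nlinarith [mul_nonneg hKnn (sub_nonneg.2 hgm), mul_pos hr hzx]
      · simp [hφ, hga]
      · exact (continuous_const.add (continuous_id.sub continuous_const |>.const_smul ε)).continuousOn
      · intro x hx
        have : HasDerivWithinAt (fun x => f a + ε * (x - a)) (ε * 1) (Set.Ici x) x :=
          (((hasDerivWithinAt_id x _).sub_const a).const_mul ε).const_add (f a)
        simpa using this
      · intro x _ _
        exact hε
    have hxk := key hx
    have hgle : g x ≤ ε := by
      have h1 : volume (V ∩ Set.Ioc a x) ≤ ENNReal.ofReal ε :=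
        le_trans (measure_mono Set.inter_subset_left) hVsmall.le
      exact ENNReal.toReal_le_of_le_ofReal hε.le h1
    have hKpos : 0 < K := by simp only [hK]; positivity
    have hxa : x - a ≤ b - a := by linarith [hx.2]
    have hxa0 : 0 ≤ x - a := by linarith [hx.1]
    simp only [hφ] at hxk
    nlinarith [mul_le_mul_of_nonneg_left hgle hKpos.le, mul_le_mul_of_nonneg_left hxa hε.le]
  intro x hx
  set A := f x - f a - C * (x - a) with hA
  set κ := 2 * (b - a) + ((L : ℝ) + |C| + 1) with hκ
  have hbound : ∀ ε : ℝ, 0 < ε → A ≤ ε * κ := fun ε hε => by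
    have := main ε hε x hx; simp only [hA]; linarith
  have hlim : Filter.Tendsto (fun ε : ℝ => ε * κ) (nhdsWithin 0 (Set.Ioi 0)) (nhds 0) := by
    have : Filter.Tendsto (fun ε : ℝ => ε * κ) (nhds 0) (nhds (0 * κ)) :=
      (continuous_mul_right κ).tendsto 0
    rw [zero_mul] at this
    exact this.mono_left nhdsWithin_le_nhds
  have : A ≤ 0 := ge_of_tendsto hlim (eventually_nhdsWithin_of_forall fun ε hε => hbound ε hε)
  linarith


/-- Riccati-type blow-up: a locally Lipschitz `M : [0,T) → ℝ` with `M(0) < 0` and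
`M' ≤ -(3/2)M²` a.e. stays negative, satisfies `1/M(t) ≥ 1/M(0) + (3/2)t`, and
forces `T ≤ 2/(3|M(0)|)`. -/
theorem riccati_blowup (T : ℝ) (hT : 0 < T) (M : ℝ → ℝ)
    (hM : ∀ c : ℝ, c < T → ∃ L : NNReal, LipschitzOnWith L M (Set.Icc 0 c))
    (hM0 : M 0 < 0)
    (hineq : ∀ᵐ t ∂(volume : Measure ℝ), t ∈ Set.Ioo (0 : ℝ) T →
      ∀ d : ℝ, HasDerivAt M d t → d ≤ -(3 / 2) * (M t) ^ 2) :
    (∀ t ∈ Set.Ico (0 : ℝ) T, M t < 0) ∧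
    (∀ t ∈ Set.Ico (0 : ℝ) T, 1 / M t ≥ 1 / M 0 + (3 / 2) * t) ∧
    T ≤ 2 / (3 * |M 0|) := by
  have hgoodM : ∀ c : ℝ, 0 < c → c < T → ∀ᵐ t ∂(volume : Measure ℝ), t ∈ Set.Ioo 0 c →
      ∃ d, HasDerivAt M d t ∧ d ≤ -(3/2) * (M t)^2 := by
    intro c hc hcT
    obtain ⟨L, hL⟩ := hM c hcT
    filter_upwards [hL.ae_differentiableWithinAt_of_mem_real, hineq] with t hdiff hin ht
    have h1 : DifferentiableWithinAt ℝ M (Set.Icc 0 c) t := hdiff ⟨ht.1.le, ht.2.le⟩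
    have h2 : DifferentiableAt ℝ M t := h1.differentiableAt (Icc_mem_nhds ht.1 ht.2)
    exact ⟨deriv M t, h2.hasDerivAt, hin ⟨ht.1, ht.2.trans hcT⟩ _ h2.hasDerivAt⟩
  have hmono : ∀ t ∈ Set.Ico (0:ℝ) T, M t ≤ M 0 := by
    intro t ht
    rcases eq_or_lt_of_le ht.1 with rfl | htpos
    · exact le_rfl
    have hc : 0 < (t + T)/2 := by linarith
    have hcT : (t + T)/2 < T := by linarith [ht.2]
    have htc : t ≤ (t + T)/2 := by linarith [ht.2]
    obtain ⟨L, hL⟩ := hM _ hcT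
    have hgood0 : ∀ᵐ s ∂(volume : Measure ℝ), s ∈ Set.Ioo (0:ℝ) ((t + T)/2) →
        ∃ d, HasDerivAt M d s ∧ d ≤ 0 := by
      filter_upwards [hgoodM _ hc hcT] with s hs hsin
      obtain ⟨d, hd, hdle⟩ := hs hsin
      exact ⟨d, hd, hdle.trans (by nlinarith [sq_nonneg (M s)])⟩
    have := lip_deriv_bound (C := 0) hc.le hL hgood0 t ⟨ht.1, htc⟩
    linarith
  have hneg : ∀ t ∈ Set.Ico (0:ℝ) T, M t < 0 := fun t ht =>
    lt_of_le_of_lt (hmono t ht) hM0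
  have hpart2 : ∀ t ∈ Set.Ico (0:ℝ) T, 1 / M t ≥ 1 / M 0 + (3/2) * t := by
    intro t ht
    rcases eq_or_lt_of_le ht.1 with rfl | htpos
    · simp
    set c := (t + T)/2 with hcdef
    have hc : 0 < c := by simp only [hcdef]; linarith
    have hcT : c < T := by simp only [hcdef]; linarith [ht.2]
    have htc : t ≤ c := by simp only [hcdef]; linarith [ht.2]
    obtain ⟨L, hL⟩ := hM c hcT
    set m := -(M 0) with hm
    have hmpos : 0 < m := by simp only [hm]; linarith
    have hMle : ∀ s ∈ Set.Icc (0:ℝ) c, M s ≤ -m := by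
      intro s hs
      have := hmono s ⟨hs.1, lt_of_le_of_lt hs.2 hcT⟩
      simp only [hm]; linarith
    set f : ℝ → ℝ := fun s => -(M s)⁻¹ with hf
    have hflip : LipschitzOnWith (Real.toNNReal ((L:ℝ) / (m * m))) f (Set.Icc 0 c) := by
      rw [lipschitzOnWith_iff_dist_le_mul]
      intro x hx y hy
      have hMx := hMle x hx
      have hMy := hMle y hy
      have hMx0 : M x ≠ 0 := by intro h; rw [h] at hMx; linarith
      have hMy0 : M y ≠ 0 := by intro h; rw [h] at hMy; linarith
      have hkey : f x - f y = (M x - M y) / (M x * M y) := by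
        simp only [hf]
        field_simp
        ring
      have hML := hL.dist_le_mul x hx y hy
      rw [Real.dist_eq] at hML
      rw [Real.dist_eq, hkey, abs_div, abs_mul]
      have habx : m ≤ |M x| := by rw [abs_of_neg (by linarith : M x < 0)]; linarith
      have haby : m ≤ |M y| := by rw [abs_of_neg (by linarith : M y < 0)]; linarith
      have hden : m * m ≤ |M x| * |M y| :=
        mul_le_mul habx haby hmpos.le (abs_nonneg _)
      have h1 : |M x - M y| / (|M x| * |M y|) ≤ ((L:ℝ) * dist x y) / (m * m) := by
        apply div_le_div₀ (by positivity) hML (by positivity) hden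
      rw [Real.coe_toNNReal _ (by positivity)]
      calc |M x - M y| / (|M x| * |M y|) ≤ ((L:ℝ) * dist x y) / (m * m) := h1
        _ = (L:ℝ) / (m * m) * dist x y := by ring
    have hgoodf : ∀ᵐ s ∂(volume : Measure ℝ), s ∈ Set.Ioo (0:ℝ) c →
        ∃ d, HasDerivAt f d s ∧ d ≤ -(3/2) := by
      filter_upwards [hgoodM c hc hcT] with s hs hsin
      obtain ⟨d, hd, hdle⟩ := hs hsin
      have hMs : M s ≤ -m := hMle s ⟨hsin.1.le, hsin.2.le⟩
      have hMs0 : M s ≠ 0 := by intro h; rw [h] at hMs; linarith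
      have hsq : 0 < (M s)^2 := by positivity
      refine ⟨-(-d / (M s)^2), (hd.inv hMs0).neg, ?_⟩
      rw [neg_div, neg_neg, div_le_iff₀ hsq]
      linarith
    have hres := lip_deriv_bound (C := -(3/2)) hc.le hflip hgoodf t ⟨ht.1, htc⟩
    simp only [hf] at hres
    have hMt0 : M t ≠ 0 := ne_of_lt (hneg t ht)
    have hM00 : M 0 ≠ 0 := ne_of_lt hM0
    rw [ge_iff_le, one_div, one_div]
    linarith
  refine ⟨hneg, hpart2, ?_⟩
  have habs0 : 0 < |M 0| := abs_pos.2 (ne_of_lt hM0)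
  have hB : ∀ t ∈ Set.Ico (0:ℝ) T, t < 2/(3*|M 0|) := by
    intro t ht
    have h1 := hpart2 t ht
    have h2 : 1 / M t < 0 := by
      rw [one_div]
      exact inv_lt_zero.2 (hneg t ht)
    have h3 : 1 / M 0 = -(1 / |M 0|) := by
      rw [abs_of_neg hM0]
      field_simp
    have h4 : (3/2) * t < 1 / |M 0| := by linarith
    have h5 := mul_lt_mul_of_pos_right h4 habs0
    rw [one_div, inv_mul_cancel₀ (ne_of_gt habs0)] at h5
    rw [lt_div_iff₀ (by positivity)]
    nlinarith
  by_contra h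
  push_neg at h
  have hBpos : 0 < 2/(3*|M 0|) := by positivity
  have hmem : (2/(3*|M 0|) + T)/2 ∈ Set.Ico (0:ℝ) T := ⟨by linarith, by linarith⟩
  have := hB _ hmem
  linarith
end
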